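/- For every x ∈ [0,1], the supremum over t > 0 of t·x − log(cosh t) equals A(x)/2, where A(x) = (1+x)·log(1+x) + (1−x)·log(1−x) (with the convention (1−x)·log(1−x) = 0 at x = 1). -/

import Mathlib

open Real Set Filter Topology

private lemma ub_lt_one {x : ℝ} (h0 : 0 ≤ x) (h1 : x < 1) (t : ℝ) :
    t * x - Real.log (Real.cosh t) ≤
      ((1 + x) * Real.log (1 + x) + (1 - x) * Real.log (1 - x)) / 2 := by
  have h1x : (0:ℝ) < 1 + x := by linarith
  have h2x : (0:ℝ) < 1 - x := by linarith
  set p₁ := Real.exp t / (1 + x) with hp₁def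
  set p₂ := Real.exp (-t) / (1 - x) with hp₂def
  have hp₁ : 0 < p₁ := by positivity
  have hp₂ : 0 < p₂ := by positivity
  have hgm := Real.geom_mean_le_arith_mean2_weighted
    (by linarith : (0:ℝ) ≤ (1 + x) / 2) (by linarith : (0:ℝ) ≤ (1 - x) / 2)
    hp₁.le hp₂.le (by ring)
  have harith : (1 + x) / 2 * p₁ + (1 - x) / 2 * p₂ = Real.cosh t := by
    rw [Real.cosh_eq, hp₁def, hp₂def]
    field_simp
  rw [harith] at hgm
  have hlog := Real.log_le_log (by positivity) hgm
  rw [Real.log_mul (by positivity) (by positivity), Real.log_rpow hp₁, Real.log_rpow hp₂,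
      Real.log_div (Real.exp_pos t).ne' h1x.ne', Real.log_div (Real.exp_pos (-t)).ne' h2x.ne',
      Real.log_exp, Real.log_exp] at hlog
  nlinarith [hlog]

theorem sSup_linear_sub_log_cosh (x : ℝ) (hx : x ∈ Set.Icc (0 : ℝ) 1) :
    sSup ((fun t : ℝ => t * x - Real.log (Real.cosh t)) '' Set.Ioi (0 : ℝ)) =
      ((1 + x) * Real.log (1 + x) + (1 - x) * Real.log (1 - x)) / 2 := by
  obtain ⟨h0, h1⟩ := hx
  set f : ℝ → ℝ := fun t => t * x - Real.log (Real.cosh t) with hf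
  have hne : (f '' Set.Ioi (0:ℝ)).Nonempty := ⟨f 1, ⟨1, by norm_num, rfl⟩⟩
  rcases eq_or_lt_of_le h1 with h1 | h1
  · -- x = 1
    subst h1
    have hub : ∀ a ∈ f '' Set.Ioi (0:ℝ), a ≤ ((1+1) * Real.log (1+1) + (1-1) * Real.log (1-1)) / 2 := by
      rintro a ⟨t, -, rfl⟩
      have hch : Real.exp t / 2 ≤ Real.cosh t := by
        rw [Real.cosh_eq]; have := Real.exp_pos (-t); linarith
      have := Real.log_le_log (by positivity) hch
      rw [Real.log_div (Real.exp_pos t).ne' two_ne_zero, Real.log_exp] at this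
      simp only [hf]
      norm_num
      linarith
    apply csSup_eq_of_forall_le_of_forall_lt_exists_gt hne hub
    intro w hw
    norm_num at hw
    -- need t > 0 with t * 1 - log cosh t > w
    have hlim : Tendsto (fun t : ℝ => Real.log (1 + Real.exp (-(2*t)))) atTop (𝓝 0) := by
      have h1 : Tendsto (fun t : ℝ => 1 + Real.exp (-(2*t))) atTop (𝓝 1) := by
        have : Tendsto (fun t : ℝ => -(2*t)) atTop atBot := by
          exact tendsto_neg_atBot_iff.mpr (tendsto_id.const_mul_atTop two_pos)
        simpa using (Real.tendsto_exp_atBot.comp this).const_add 1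
      have := (Real.continuousAt_log one_ne_zero).tendsto.comp h1
      simpa [Function.comp_def] using this
    have hev : ∀ᶠ t : ℝ in atTop, Real.log (1 + Real.exp (-(2*t))) < Real.log 2 - w := by
      exact hlim.eventually (gt_mem_nhds (by linarith))
    obtain ⟨t, ht, htpos⟩ := (hev.and (eventually_gt_atTop 0)).exists
    refine ⟨f t, ⟨t, htpos, rfl⟩, ?_⟩
    have hcosh : Real.cosh t = Real.exp t * (1 + Real.exp (-(2*t))) / 2 := by
      have h2 : Real.exp (-t) = Real.exp t * Real.exp (-(2*t)) := by
        rw [← Real.exp_add]; congr 1; ring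
      rw [Real.cosh_eq, h2]; ring
    have : Real.log (Real.cosh t) = t + Real.log (1 + Real.exp (-(2*t))) - Real.log 2 := by
      rw [hcosh, Real.log_div (by positivity) two_ne_zero,
          Real.log_mul (Real.exp_pos t).ne' (by positivity), Real.log_exp]
    simp only [hf]
    rw [this]
    linarith
  · -- x < 1
    have hub : ∀ a ∈ f '' Set.Ioi (0:ℝ),
        a ≤ ((1 + x) * Real.log (1 + x) + (1 - x) * Real.log (1 - x)) / 2 := by
      rintro a ⟨t, -, rfl⟩
      exact ub_lt_one h0 h1 t
    rcases eq_or_lt_of_le h0 with h0' | h0'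
    · -- x = 0
      subst h0'
      apply csSup_eq_of_forall_le_of_forall_lt_exists_gt hne hub
      intro w hw
      norm_num at hw
      have hc : Tendsto (fun t : ℝ => Real.log (Real.cosh t)) (𝓝 0) (𝓝 0) := by
        have : ContinuousAt (fun t : ℝ => Real.log (Real.cosh t)) 0 :=
          (Real.continuous_cosh.log (fun t => (Real.cosh_pos t).ne')).continuousAt
        simpa using this.tendsto
      have hev : ∀ᶠ t : ℝ in 𝓝[>] (0:ℝ), Real.log (Real.cosh t) < -w :=
        (hc.mono_left nhdsWithin_le_nhds).eventually (gt_mem_nhds (by linarith))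
      obtain ⟨t, ht, htpos⟩ := (hev.and self_mem_nhdsWithin).exists
      refine ⟨f t, ⟨t, htpos, rfl⟩, ?_⟩
      simp only [hf]
      norm_num
      linarith
    · -- 0 < x < 1
      have h1x : (0:ℝ) < 1 + x := by linarith
      have h2x : (0:ℝ) < 1 - x := by linarith
      set t₀ := Real.log ((1 + x) / (1 - x)) / 2 with ht₀
      have ht₀pos : 0 < t₀ := by
        have : (1:ℝ) < (1 + x) / (1 - x) := by
          rw [lt_div_iff₀ h2x]; linarith
        have h := Real.log_pos this
        rw [ht₀]; linarith
      have hu : Real.exp t₀ * Real.exp t₀ = (1 + x) / (1 - x) := by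
        rw [← Real.exp_add, ht₀]
        rw [show Real.log ((1+x)/(1-x)) / 2 + Real.log ((1+x)/(1-x)) / 2
            = Real.log ((1+x)/(1-x)) by ring]
        exact Real.exp_log (by positivity)
      have hupos := Real.exp_pos t₀
      have hcosh : Real.cosh t₀ = (Real.exp t₀ * Real.exp t₀ + 1) / (2 * Real.exp t₀) := by
        have key : (Real.exp t₀ + Real.exp (-t₀)) * Real.exp t₀
            = Real.exp t₀ * Real.exp t₀ + 1 := by
          have e1 : Real.exp (-t₀) * Real.exp t₀ = 1 := by rw [← Real.exp_add]; simp
          rw [add_mul, e1]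
        rw [Real.cosh_eq, eq_div_iff (by positivity : (0:ℝ) < 2 * Real.exp t₀).ne']
        linear_combination key
      have hsum : Real.exp t₀ * Real.exp t₀ + 1 = 2 / (1 - x) := by
        rw [hu]; field_simp; norm_num
      have hlogcosh : Real.log (Real.cosh t₀) = -Real.log (1 - x) - t₀ := by
        rw [hcosh, hsum, Real.log_div (by positivity) (by positivity),
            Real.log_div two_ne_zero h2x.ne', Real.log_mul two_ne_zero hupos.ne',
            Real.log_exp]
        ring
      have hval : f t₀ = ((1 + x) * Real.log (1 + x) + (1 - x) * Real.log (1 - x)) / 2 := by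
        simp only [hf]
        rw [hlogcosh, ht₀, Real.log_div h1x.ne' h2x.ne']
        ring
      exact IsGreatest.csSup_eq ⟨⟨t₀, ht₀pos, hval⟩, hub⟩
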